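/- Let μ : ℍ → ℍ be μ(h) = (1/2)·h̄·i·h. Then the derivative of μ at h in direction v equals (1/2)(v̄·i·h + h̄·i·v); moreover, pairing with the imaginary unit i, the real part Re(ī · dμ_h(v)) equals ⟨I₁(K_h), v⟩ where K_h = i·h is the fundamental vector field of the U(1)-action h ↦ e^{iθ}h and I₁(v) = v·ī. In other words, μ paired with i is a Hamiltonian (moment map component) for the U(1)-action with respect to the Kähler form ω₁(v, w) = ⟨I₁v, w⟩. -/

import Mathlib

open Quaternion RealInnerProductSpace
noncomputable def qI : Quaternion ℝ := ⟨0, 1, 0, 0⟩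
noncomputable def μ (h : Quaternion ℝ) : Quaternion ℝ := (1 / 2 : ℝ) • (star h * qI * h)

noncomputable def starCLM : Quaternion ℝ →L[ℝ] Quaternion ℝ :=
  LinearMap.mkContinuous
    { toFun := star, map_add' := star_add,
      map_smul' := fun r a => Quaternion.star_smul r a }
    1 (fun a => by simp [Quaternion.norm_star])

/-- the derivative of `μ(h) = (1/2)h̄·i·h` at `h` in direction `v` is
`(1/2)(v̄·i·h + h̄·i·v)`, and pairing with `i` gives the Hamiltonian identity
`Re(ī · dμ_h(v)) = ⟪I₁(K_h), v⟫`, where `K_h = i·h` is the fundamental vector field of the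
U(1)-action and `I₁(v) = v·ī`. -/
theorem moment_map_derivative (h : Quaternion ℝ) :
    ∃ D : Quaternion ℝ →L[ℝ] Quaternion ℝ,
      HasFDerivAt μ D h ∧
      (∀ v : Quaternion ℝ, D v = (1 / 2 : ℝ) • (star v * qI * h + star h * qI * v)) ∧
      (∀ v : Quaternion ℝ, (star qI * D v).re = ⟪(qI * h) * star qI, v⟫) := by
  have hstar : HasFDerivAt (fun y : Quaternion ℝ => star y) starCLM h := starCLM.hasFDerivAt
  have h1 := (hstar.mul' (hasFDerivAt_const qI h)).mul' (hasFDerivAt_id h)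
  have h2 := h1.const_smul (1 / 2 : ℝ)
  refine ⟨_, h2, ?_, ?_⟩
  · intro v
    simp [ContinuousLinearMap.smul_apply, ContinuousLinearMap.add_apply,
      ContinuousLinearMap.smulRight_apply, starCLM, LinearMap.mkContinuous_apply,
      smul_eq_mul, mul_add, add_comm, mul_assoc]
  · intro v
    have e0 : qI.re = 0 := rfl
    have e1 : qI.imI = 1 := rfl
    have e2 : qI.imJ = 0 := rfl
    have e3 : qI.imK = 0 := rfl
    simp [ContinuousLinearMap.smul_apply, ContinuousLinearMap.add_apply,
      ContinuousLinearMap.smulRight_apply, starCLM, LinearMap.mkContinuous_apply,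
      Quaternion.inner_def, e0, e1, e2, e3]
    ring
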